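/- If χ is a primitive Dirichlet character mod q with q > 1, then for all complex s, L(1−s, conj(χ)) = τ(conj(χ))·q^{s−1}·(2π)^{−s}·Γ(s)·(e^{−πis/2} + χ(−1)·e^{πis/2})·L(s, χ), where τ denotes the Gauss sum. -/

import Mathlib

open Complex Real

/-- Gauss sum `τ(χ) = ∑_{a=1}^{q} χ(a) e(a/q)`. -/
noncomputable def tauSum {q : ℕ} (χ : DirichletCharacter ℂ q) : ℂ :=
  ∑ a ∈ Finset.range q, χ (a : ZMod q) * Complex.exp (2 * Real.pi * Complex.I * a / q)

/-- The Gauss sum `tauSum` agrees with Mathlib's `gaussSum χ stdAddChar`. -/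
lemma tauSum_eq_gaussSum {q : ℕ} [NeZero q] (χ : DirichletCharacter ℂ q) :
    tauSum χ = gaussSum χ ZMod.stdAddChar := by
  rw [gaussSum, tauSum]
  refine Finset.sum_nbij' (fun a ↦ (a : ZMod q)) (fun b ↦ b.val) (fun a ha ↦ Finset.mem_univ _)
    (fun b _ ↦ Finset.mem_range.mpr (ZMod.val_lt b)) ?_ ?_ ?_
  · intro a ha
    exact ZMod.val_natCast_of_lt (Finset.mem_range.mp ha)
  · intro b _
    simp [ZMod.natCast_val, ZMod.cast_id]
  · intro a ha
    show _ * _ = _ * ZMod.stdAddChar ((a : ZMod q))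
    congr 1
    rw [show ((a : ZMod q)) = ((a : ℤ) : ZMod q) by push_cast; rfl, ZMod.stdAddChar_coe]
    push_cast
    ring_nf

/-- The conjugate of a primitive Dirichlet character is primitive. -/
lemma star_isPrimitive {q : ℕ} [NeZero q] {χ : DirichletCharacter ℂ q}
    (h : χ.IsPrimitive) : (star χ).IsPrimitive := by
  have hker : ((star χ).toUnitHom).ker = χ.toUnitHom.ker := by
    ext u
    simp only [MonoidHom.mem_ker, ← Units.val_inj, MulChar.coe_toUnitHom, Units.val_one,
      MulChar.star_apply]
    constructor
    · intro hu
      have := congrArg (star : ℂ → ℂ) hu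
      simpa using this
    · intro hu
      rw [hu]
      simp
  have hset : DirichletCharacter.conductorSet (star χ) = DirichletCharacter.conductorSet χ := by
    ext d
    simp only [DirichletCharacter.mem_conductorSet_iff]
    constructor
    · intro hf
      have hd := hf.dvd
      rw [DirichletCharacter.factorsThrough_iff_ker_unitsMap hd] at hf ⊢
      rwa [hker] at hf
    · intro hf
      have hd := hf.dvd
      rw [DirichletCharacter.factorsThrough_iff_ker_unitsMap hd] at hf ⊢
      rwa [hker]
  unfold DirichletCharacter.IsPrimitive DirichletCharacter.conductor
  rw [hset]
  exact h

/-- `ZMod.LFunction` is linear in the function argument (constant multiples). -/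
lemma ZMod.LFunction_const_mul' {q : ℕ} [NeZero q] (c : ℂ) (Φ : ZMod q → ℂ) (s : ℂ) :
    ZMod.LFunction (fun j ↦ c * Φ j) s = c * ZMod.LFunction Φ s := by
  simp only [ZMod.LFunction, mul_assoc, ← Finset.mul_sum]
  ring

theorem functional_equation (q : ℕ) [NeZero q] (hq : 1 < q)
    (χ : DirichletCharacter ℂ q) (hχ : χ.IsPrimitive) (s : ℂ)
    (hs : ∀ k : ℕ, s ≠ -(k : ℂ)) :
    DirichletCharacter.LFunction (star χ) (1 - s) =
      tauSum (star χ) * (q : ℂ) ^ (s - 1) * (2 * (Real.pi : ℂ)) ^ (-s) *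
        Complex.Gamma s *
        (Complex.exp (-(Real.pi : ℂ) * Complex.I * s / 2) +
          χ (-1) * Complex.exp ((Real.pi : ℂ) * Complex.I * s / 2)) *
        DirichletCharacter.LFunction χ s := by
  have hN : q ≠ 1 := hq.ne'
  have hsχ : (star χ).IsPrimitive := star_isPrimitive hχ
  have hΦ0 : (star χ) (0 : ZMod q) = 0 := by
    rw [MulChar.star_apply, DirichletCharacter.map_zero' χ hN, star_zero]
  have hstarinv : (star χ)⁻¹ = χ := by rw [MulChar.star_eq_inv, inv_inv]
  set τ : ℂ := gaussSum (star χ) ZMod.stdAddChar with hτ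
  have hneg1 : χ (-1) * χ (-1) = 1 := by
    rw [← map_mul, neg_mul_neg, one_mul, map_one]
  have hF : ZMod.dft ⇑(star χ) = fun j ↦ χ (-1) * τ * χ j := by
    funext j
    rw [hsχ.fourierTransform_eq_inv_mul_gaussSum, hstarinv, ← neg_one_mul j, map_mul]
    ring
  have hF2 : ZMod.dft (fun x ↦ (star χ) (-x)) = fun j ↦ τ * χ j := by
    rw [ZMod.dft_comp_neg ⇑(star χ)]
    funext j
    rw [hF]
    simp only [← neg_one_mul j, map_mul]
    calc χ (-1) * τ * (χ (-1) * χ j) = (χ (-1) * χ (-1)) * (τ * χ j) := by ring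
    _ = τ * χ j := by rw [hneg1, one_mul]
  have key := ZMod.LFunction_one_sub (⇑(star χ)) hs (Or.inl hΦ0)
  rw [hF, hF2] at key
  have h1 : ZMod.LFunction (fun j ↦ χ (-1) * τ * χ j) s =
      χ (-1) * τ * DirichletCharacter.LFunction χ s := by
    exact ZMod.LFunction_const_mul' (χ (-1) * τ) (⇑χ) s
  have h2 : ZMod.LFunction (fun j ↦ τ * χ j) s = τ * DirichletCharacter.LFunction χ s := by
    exact ZMod.LFunction_const_mul' τ (⇑χ) s
  rw [h1, h2] at key
  have hL : DirichletCharacter.LFunction (star χ) (1 - s) =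
      ZMod.LFunction (⇑(star χ)) (1 - s) := rfl
  rw [hL, key, tauSum_eq_gaussSum, ← hτ]
  ring
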